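/- Let λ be a real number with λ > 0, and set R_∞ := √(1+10λ+λ²)/(1+λ), g := √(λ(1+λ))/(1+10λ+λ²)^{3/4}, and S_∞ := (R_∞ − 1)/(2gR_∞). Then R_∞ = 1 + 2gR_∞S_∞, S_∞ = g(S_∞² + 2R_∞), and R_∞² = 1 + 8g²R_∞³. -/

import Mathlib

/-- The explicit parametrization `R_∞ = √(1+10λ+λ²)/(1+λ)`, `g = √(λ(1+λ))/(1+10λ+λ²)^{3/4}`,
`S_∞ = (R_∞-1)/(2gR_∞)` solves `R_∞ = 1 + 2gR_∞S_∞`, `S_∞ = g(S_∞² + 2R_∞)` and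
`R_∞² = 1 + 8g²R_∞³`. -/
theorem stmt15 (lam : ℝ) (hlam : 0 < lam)
    (Rinf g Sinf : ℝ)
    (hR : Rinf = Real.sqrt (1 + 10 * lam + lam ^ 2) / (1 + lam))
    (hg : g = Real.sqrt (lam * (1 + lam)) / (1 + 10 * lam + lam ^ 2) ^ ((3 : ℝ) / 4))
    (hS : Sinf = (Rinf - 1) / (2 * g * Rinf)) :
    Rinf = 1 + 2 * g * Rinf * Sinf ∧
    Sinf = g * (Sinf ^ 2 + 2 * Rinf) ∧
    Rinf ^ 2 = 1 + 8 * g ^ 2 * Rinf ^ 3 := by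
  have hD : (0:ℝ) < 1 + 10 * lam + lam ^ 2 := by nlinarith
  have hl1 : (0:ℝ) < 1 + lam := by linarith
  set s := Real.sqrt (1 + 10 * lam + lam ^ 2) with hs
  set t := Real.sqrt (lam * (1 + lam)) with ht
  set p := (1 + 10 * lam + lam ^ 2) ^ ((3 : ℝ) / 4) with hp
  have hspos : 0 < s := Real.sqrt_pos.mpr hD
  have htpos : 0 < t := Real.sqrt_pos.mpr (by positivity)
  have hppos : 0 < p := Real.rpow_pos_of_pos hD _
  have hs2 : s ^ 2 = 1 + 10 * lam + lam ^ 2 := Real.sq_sqrt hD.le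
  have ht2 : t ^ 2 = lam * (1 + lam) := Real.sq_sqrt (by positivity)
  have hp2 : p ^ 2 = (1 + 10 * lam + lam ^ 2) * s := by
    rw [hp, ← Real.rpow_natCast _ 2, ← Real.rpow_mul hD.le]
    norm_num
    rw [show (3:ℝ)/2 = 1 + 1/2 by norm_num, Real.rpow_add hD, Real.rpow_one,
      ← Real.sqrt_eq_rpow]
  have hRpos : 0 < Rinf := by rw [hR]; positivity
  have hgpos : 0 < g := by rw [hg]; positivity
  have h3 : Rinf ^ 2 = 1 + 8 * g ^ 2 * Rinf ^ 3 := by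
    rw [hR, hg]
    field_simp
    linear_combination (-(1+lam)*s*(8*lam-(1+10*lam+lam^2)))*hs2 +
      (-8*s^3)*ht2 + (-((1+lam)^3-(1+lam)*s^2))*hp2
  have h1 : Rinf = 1 + 2 * g * Rinf * Sinf := by
    rw [hS]; field_simp; ring
  have h2 : Sinf = g * (Sinf ^ 2 + 2 * Rinf) := by
    rw [hS]
    field_simp
    nlinarith [h3, hgpos, hRpos]
  exact ⟨h1, h2, h3⟩
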